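/- Consider the profile P* over alternatives C = {c, b, c₃, …, c_m} consisting of k+1 copies of c ≻ b ≻ c₃ ≻ ⋯ ≻ c_m and k−1 copies of b ≻ c₃ ≻ ⋯ ≻ c_m ≻ c. Then for the Mallows likelihood, (Σ_{V∈L_c(C)} φ^{Kendall(P*,V)}) / (Σ_{V∈L_b(C)} φ^{Kendall(P*,V)}) = [(1+φ^{2k}+⋯+φ^{2k(m−2)}) / (1+φ²+⋯+φ^{2(m−2)})] · (1/φ²). -/

import Mathlib

open Finset

/-- `a` is preferred to `b` in the linear order `V` (positions: 0 = top). -/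
def prefers {m : ℕ} (V : Equiv.Perm (Fin m)) (a b : Fin m) : Prop :=
  V.symm a < V.symm b

instance {m : ℕ} (V : Equiv.Perm (Fin m)) (a b : Fin m) : Decidable (prefers V a b) :=
  inferInstanceAs (Decidable (_ < _))

/-- Kendall-tau distance between two linear orders. -/
def kendall {m : ℕ} (V W : Equiv.Perm (Fin m)) : ℕ :=
  (Finset.univ.filter (fun p : Fin m × Fin m =>
    p.1 < p.2 ∧ ¬ (prefers V p.1 p.2 ↔ prefers W p.1 p.2))).card

/-- Total Kendall-tau distance between a profile and a linear order. -/
def kendallP {m : ℕ} (P : Multiset (Equiv.Perm (Fin m))) (W : Equiv.Perm (Fin m)) : ℕ :=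
  (P.map (fun V => kendall V W)).sum

/-- Weighted-majority-graph weight `w_P(a,b)`. -/
def wP {m : ℕ} (P : Multiset (Equiv.Perm (Fin m))) (a b : Fin m) : ℤ :=
  ((P.filter (fun V => prefers V a b)).card : ℤ)
    - ((P.filter (fun V => prefers V b a)).card : ℤ)

open Equiv

/-- inversions of `W` not involving alternative `0`. -/
def invNZ {n : ℕ} (W : Equiv.Perm (Fin n)) : ℕ :=
  (Finset.univ.filter (fun p : Fin n × Fin n =>
     (p.1 : ℕ) ≠ 0 ∧ p.1 < p.2 ∧ W.symm p.2 < W.symm p.1)).card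

lemma prefers_one {n : ℕ} (a b : Fin n) : prefers 1 a b ↔ a < b := by
  simp [prefers]
  exact Iff.rfl

lemma not_prefers {n : ℕ} (W : Equiv.Perm (Fin n)) {a b : Fin n} (hab : a ≠ b) :
    ¬ prefers W a b ↔ W.symm b < W.symm a := by
  unfold prefers
  rw [not_lt]
  constructor
  · intro h
    exact lt_of_le_of_ne h (fun he => hab (W.symm.injective he).symm)
  · exact le_of_lt

/-- count of the `p.1 = 0` fiber, `<` version -/
lemma card_fiber_lt {n : ℕ} (W : Equiv.Perm (Fin (n + 1))) :
    ((Finset.univ.filter (fun p : Fin (n+1) × Fin (n+1) =>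
      (p.1 : ℕ) = 0 ∧ p.1 < p.2 ∧ W.symm p.2 < W.symm p.1)).card) = (W.symm 0 : ℕ) := by
  rw [← Fin.card_Iio (W.symm 0)]
  apply Finset.card_nbij' (i := fun p => W.symm p.2) (j := fun q => (0, W q))
  · intro p hp
    replace hp := Finset.mem_coe.mp hp
    simp only [mem_filter, mem_univ, true_and] at hp
    obtain ⟨h0, _, hlt⟩ := hp
    have : p.1 = 0 := Fin.ext h0
    rw [this] at hlt
    simpa [Finset.mem_Iio] using hlt
  · intro q hq
    replace hq := Finset.mem_coe.mp hq
    refine Finset.mem_coe.mpr ?_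
    simp only [Finset.mem_Iio] at hq
    simp only [mem_filter, mem_univ, true_and]
    have hne : W q ≠ 0 := by
      intro h
      have : q = W.symm 0 := by rw [← h, Equiv.symm_apply_apply]
      exact absurd this (ne_of_lt hq)
    refine ⟨rfl, Fin.pos_iff_ne_zero.mpr hne, ?_⟩
    simpa using hq
  · intro p hp
    replace hp := Finset.mem_coe.mp hp
    simp only [mem_filter, mem_univ, true_and] at hp
    have h1 : p.1 = 0 := Fin.ext hp.1
    beta_reduce
    rw [Equiv.apply_symm_apply, ← h1]
  · intro q hq
    simp

/-- count of the `p.1 = 0` fiber, `>` version -/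
lemma card_fiber_gt {n : ℕ} (W : Equiv.Perm (Fin (n + 1))) :
    ((Finset.univ.filter (fun p : Fin (n+1) × Fin (n+1) =>
      (p.1 : ℕ) = 0 ∧ p.1 < p.2 ∧ W.symm p.1 < W.symm p.2)).card) = n - (W.symm 0 : ℕ) := by
  have := Fin.card_Ioi (W.symm 0)
  rw [show n + 1 - 1 - (W.symm 0 : ℕ) = n - (W.symm 0 : ℕ) by omega] at this
  rw [← this]
  apply Finset.card_nbij' (i := fun p => W.symm p.2) (j := fun q => (0, W q))
  · intro p hp
    replace hp := Finset.mem_coe.mp hp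
    simp only [mem_filter, mem_univ, true_and] at hp
    obtain ⟨h0, _, hlt⟩ := hp
    have : p.1 = 0 := Fin.ext h0
    rw [this] at hlt
    simpa [Finset.mem_Ioi] using hlt
  · intro q hq
    replace hq := Finset.mem_coe.mp hq
    refine Finset.mem_coe.mpr ?_
    simp only [Finset.mem_Ioi] at hq
    simp only [mem_filter, mem_univ, true_and]
    have hne : W q ≠ 0 := by
      intro h
      have : q = W.symm 0 := by rw [← h, Equiv.symm_apply_apply]
      exact absurd this (ne_of_gt hq)
    refine ⟨rfl, Fin.pos_iff_ne_zero.mpr hne, ?_⟩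
    simpa using hq
  · intro p hp
    replace hp := Finset.mem_coe.mp hp
    simp only [mem_filter, mem_univ, true_and] at hp
    have h1 : p.1 = 0 := Fin.ext hp.1
    beta_reduce
    rw [Equiv.apply_symm_apply, ← h1]
  · intro q hq
    simp

lemma kendall_one_eq {n : ℕ} (W : Equiv.Perm (Fin n)) :
    kendall 1 W = (Finset.univ.filter (fun p : Fin n × Fin n =>
      p.1 < p.2 ∧ W.symm p.2 < W.symm p.1)).card := by
  unfold kendall
  congr 1
  apply Finset.filter_congr
  intro p _
  constructor
  · rintro ⟨hlt, hni⟩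
    refine ⟨hlt, (not_prefers W (ne_of_lt hlt)).mp ?_⟩
    intro hw
    exact hni ⟨fun _ => hw, fun _ => (prefers_one _ _).mpr hlt⟩
  · rintro ⟨hlt, hflip⟩
    refine ⟨hlt, fun hiff => ?_⟩
    exact (not_prefers W (ne_of_lt hlt)).mpr hflip (hiff.mp ((prefers_one _ _).mpr hlt))

/-- split of `kendall 1 W`. -/
lemma kendall_one_decomp {n : ℕ} (W : Equiv.Perm (Fin (n + 1))) :
    kendall 1 W = invNZ W + (W.symm 0 : ℕ) := by
  rw [kendall_one_eq]
  rw [← Finset.card_filter_add_card_filter_not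
    (p := fun p : Fin (n+1) × Fin (n+1) => (p.1 : ℕ) ≠ 0)]
  congr 1
  · rw [Finset.filter_filter]
    unfold invNZ
    congr 1
    apply Finset.filter_congr
    intro p _
    tauto
  · rw [Finset.filter_filter, ← card_fiber_lt W]
    congr 1
    apply Finset.filter_congr
    intro p _
    tauto
lemma rot_symm_zero {n : ℕ} : (finRotate (n + 2)).symm 0 = Fin.last (n + 1) := by
  rw [Equiv.symm_apply_eq]
  exact (finRotate_last).symm

lemma prefers_rot_zero {n : ℕ} (b : Fin (n + 2)) : ¬ prefers (finRotate (n + 2)) 0 b := by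
  unfold prefers
  rw [rot_symm_zero, not_lt]
  exact Fin.le_last _

lemma rot_symm_ne_zero {n : ℕ} (a : Fin (n + 2)) (ha : (a : ℕ) ≠ 0) :
    (((finRotate (n + 2)).symm a : Fin (n + 2)) : ℕ) = (a : ℕ) - 1 := by
  have hlt : (a : ℕ) - 1 < n + 2 := by omega
  have : (finRotate (n + 2)).symm a = ⟨(a : ℕ) - 1, hlt⟩ := by
    rw [Equiv.symm_apply_eq, finRotate_succ_apply]
    apply Fin.ext
    simp only [Fin.add_def, Fin.val_one]
    have h2 := a.isLt
    rw [Nat.mod_eq_of_lt (by omega)]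
    omega
  rw [this]

lemma prefers_rot_pos {n : ℕ} (a b : Fin (n + 2)) (ha : (a : ℕ) ≠ 0) (hab : a < b) :
    prefers (finRotate (n + 2)) a b := by
  unfold prefers
  rw [Fin.lt_def, rot_symm_ne_zero a ha, rot_symm_ne_zero b (by rw [Fin.lt_def] at hab; omega)]
  rw [Fin.lt_def] at hab
  omega

/-- split of `kendall R W`. -/
lemma kendall_rot_decomp {n : ℕ} (W : Equiv.Perm (Fin (n + 2))) :
    kendall (finRotate (n + 2)) W = invNZ W + (n + 1 - (W.symm 0 : ℕ)) := by
  unfold kendall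
  rw [← Finset.card_filter_add_card_filter_not
    (p := fun p : Fin (n+2) × Fin (n+2) => (p.1 : ℕ) ≠ 0)]
  congr 1
  · rw [Finset.filter_filter]
    unfold invNZ
    congr 1
    apply Finset.filter_congr
    intro p _
    constructor
    · rintro ⟨⟨hlt, hni⟩, h0⟩
      refine ⟨h0, hlt, (not_prefers W (ne_of_lt hlt)).mp ?_⟩
      intro hw
      exact hni ⟨fun _ => hw, fun _ => prefers_rot_pos _ _ h0 hlt⟩
    · rintro ⟨h0, hlt, hflip⟩
      refine ⟨⟨hlt, fun hiff => ?_⟩, h0⟩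
      exact (not_prefers W (ne_of_lt hlt)).mpr hflip (hiff.mp (prefers_rot_pos _ _ h0 hlt))
  · rw [Finset.filter_filter, ← card_fiber_gt W]
    congr 1
    apply Finset.filter_congr
    intro p _
    simp only [not_not]
    constructor
    · rintro ⟨⟨hlt, hni⟩, h0⟩
      have hp1 : p.1 = 0 := Fin.ext h0
      refine ⟨h0, hlt, ?_⟩
      by_contra hnw
      rw [not_lt] at hnw
      apply hni
      constructor
      · intro hr
        exact absurd (hp1 ▸ hr) (prefers_rot_zero p.2)
      · intro hw
        exact absurd hw (by unfold prefers; rw [not_lt]; exact hnw)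
    · rintro ⟨h0, hlt, hw⟩
      have hp1 : p.1 = 0 := Fin.ext h0
      refine ⟨⟨hlt, fun hiff => ?_⟩, h0⟩
      exact absurd (hp1 ▸ (hiff.mpr hw)) (prefers_rot_zero p.2)
lemma fin_eq_succ_of_ne_zero {r : ℕ} (a : Fin (r + 2)) (ha : (a : ℕ) ≠ 0) :
    a = (⟨(a : ℕ) - 1, by have := a.isLt; omega⟩ : Fin (r + 1)).succ := by
  apply Fin.ext
  simp only [Fin.val_succ]
  omega

section DecompZero

variable {r : ℕ} (e : Equiv.Perm (Fin (r + 1)))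

lemma W0_succ (i : Fin (r + 1)) :
    (Equiv.Perm.decomposeFin.symm (0, e)) i.succ = (e i).succ := by
  rw [Equiv.Perm.decomposeFin_symm_apply_succ]
  simp

lemma W0_symm_succ (a : Fin (r + 1)) :
    (Equiv.Perm.decomposeFin.symm (0, e)).symm a.succ = (e.symm a).succ := by
  rw [Equiv.symm_apply_eq, W0_succ, Equiv.apply_symm_apply]

lemma W0_symm_zero :
    (Equiv.Perm.decomposeFin.symm (0, e)).symm 0 = 0 := by
  rw [Equiv.symm_apply_eq, Equiv.Perm.decomposeFin_symm_apply_zero]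

lemma invNZ_W0 : invNZ (Equiv.Perm.decomposeFin.symm (0, e)) = kendall 1 e := by
  rw [kendall_one_eq]
  unfold invNZ
  apply Finset.card_nbij'
    (i := fun p => ((⟨(p.1 : ℕ) - 1, by have := p.1.isLt; omega⟩ : Fin (r+1)),
                    (⟨(p.2 : ℕ) - 1, by have := p.2.isLt; omega⟩ : Fin (r+1))))
    (j := fun p => (p.1.succ, p.2.succ))
  · intro p hp
    replace hp := Finset.mem_coe.mp hp
    refine Finset.mem_coe.mpr ?_
    simp only [Finset.mem_filter, Finset.mem_univ, true_and] at hp ⊢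
    obtain ⟨h0, hlt, hflip⟩ := hp
    rw [Fin.lt_def] at hlt
    have h20 : (p.2 : ℕ) ≠ 0 := by omega
    constructor
    · rw [Fin.lt_def]
      simp only
      omega
    · have e1 := fin_eq_succ_of_ne_zero p.1 h0
      have e2 := fin_eq_succ_of_ne_zero p.2 h20
      rw [e1, e2, W0_symm_succ, W0_symm_succ, Fin.succ_lt_succ_iff] at hflip
      exact hflip
  · intro p hp
    replace hp := Finset.mem_coe.mp hp
    refine Finset.mem_coe.mpr ?_
    simp only [Finset.mem_filter, Finset.mem_univ, true_and] at hp ⊢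
    obtain ⟨hlt, hflip⟩ := hp
    refine ⟨by simp [Fin.val_succ], Fin.succ_lt_succ_iff.mpr hlt, ?_⟩
    rw [W0_symm_succ, W0_symm_succ]
    exact Fin.succ_lt_succ_iff.mpr hflip
  · intro p hp
    replace hp := Finset.mem_coe.mp hp
    simp only [Finset.mem_filter, Finset.mem_univ, true_and] at hp
    obtain ⟨h0, hlt, _⟩ := hp
    rw [Fin.lt_def] at hlt
    have h20 : (p.2 : ℕ) ≠ 0 := by omega
    exact Prod.ext (fin_eq_succ_of_ne_zero p.1 h0).symm (fin_eq_succ_of_ne_zero p.2 h20).symm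
  · intro p hp
    apply Prod.ext <;> (apply Fin.ext; simp [Fin.val_succ])

lemma decomposeFin_fst {n : ℕ} (W : Equiv.Perm (Fin (n + 1))) :
    (Equiv.Perm.decomposeFin W).1 = W 0 := by
  have := Equiv.Perm.decomposeFin_symm_apply_zero
    (Equiv.Perm.decomposeFin W).1 (Equiv.Perm.decomposeFin W).2
  rw [Prod.mk.eta, Equiv.symm_apply_apply] at this
  exact this.symm

lemma reconstruct_zero (W : Equiv.Perm (Fin (r + 2))) (hW : ((W.symm 0 : Fin (r+2)) : ℕ) = 0) :
    Equiv.Perm.decomposeFin.symm (0, (Equiv.Perm.decomposeFin W).2) = W := by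
  have h0 : W.symm 0 = 0 := Fin.ext hW
  have h1 : (0 : Fin (r + 2)) = W 0 := (Equiv.symm_apply_eq W).mp h0
  rw [show (0 : Fin (r+2)) = (Equiv.Perm.decomposeFin W).1 from by rw [decomposeFin_fst]; exact h1,
    Prod.mk.eta, Equiv.symm_apply_apply]

lemma sumA (F : ℕ → ℝ) :
    ∑ W ∈ Finset.univ.filter
        (fun W : Equiv.Perm (Fin (r + 2)) => ((W.symm 0 : Fin (r + 2)) : ℕ) = 0),
      F (invNZ W) = ∑ e : Equiv.Perm (Fin (r + 1)), F (kendall 1 e) := by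
  apply Finset.sum_nbij' (i := fun W => (Equiv.Perm.decomposeFin W).2)
    (j := fun e => Equiv.Perm.decomposeFin.symm (0, e))
  · intro W _
    exact Finset.mem_univ _
  · intro e _
    simp only [Finset.mem_filter, Finset.mem_univ, true_and]
    rw [W0_symm_zero]
    rfl
  · intro W hW
    simp only [Finset.mem_filter, Finset.mem_univ, true_and] at hW
    exact reconstruct_zero W hW
  · intro e _
    rw [Equiv.apply_symm_apply]
  · intro W hW
    simp only [Finset.mem_filter, Finset.mem_univ, true_and] at hW
    rw [← reconstruct_zero W hW, invNZ_W0, Equiv.apply_symm_apply]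

end DecompZero
section DecompOne

variable {r : ℕ} (e : Equiv.Perm (Fin (r + 1)))

lemma W1_symm_one :
    (Equiv.Perm.decomposeFin.symm (1, e)).symm 1 = 0 := by
  rw [Equiv.symm_apply_eq, Equiv.Perm.decomposeFin_symm_apply_zero]

lemma W1_symm_zero :
    (Equiv.Perm.decomposeFin.symm (1, e)).symm 0 = (e.symm 0).succ := by
  rw [Equiv.symm_apply_eq, Equiv.Perm.decomposeFin_symm_apply_succ, Equiv.apply_symm_apply,
    Fin.succ_zero_eq_one, Equiv.swap_apply_right]

lemma W1_symm_succ (a : Fin (r + 1)) (ha : (a : ℕ) ≠ 0) :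
    (Equiv.Perm.decomposeFin.symm (1, e)).symm a.succ = (e.symm a).succ := by
  rw [Equiv.symm_apply_eq, Equiv.Perm.decomposeFin_symm_apply_succ, Equiv.apply_symm_apply]
  rw [Equiv.swap_apply_of_ne_of_ne (Fin.succ_ne_zero a)]
  intro h
  apply ha
  have : a.succ = (0 : Fin (r + 1)).succ := by rw [Fin.succ_zero_eq_one]; exact h
  have := Fin.succ_injective _ this
  simp [this]

lemma invNZ_W1 : invNZ (Equiv.Perm.decomposeFin.symm (1, e)) = invNZ e := by
  unfold invNZ
  apply Finset.card_nbij'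
    (i := fun p => ((⟨(p.1 : ℕ) - 1, by have := p.1.isLt; omega⟩ : Fin (r+1)),
                    (⟨(p.2 : ℕ) - 1, by have := p.2.isLt; omega⟩ : Fin (r+1))))
    (j := fun p => (p.1.succ, p.2.succ))
  · intro p hp
    replace hp := Finset.mem_coe.mp hp
    refine Finset.mem_coe.mpr ?_
    simp only [Finset.mem_filter, Finset.mem_univ, true_and] at hp ⊢
    obtain ⟨h0, hlt, hflip⟩ := hp
    rw [Fin.lt_def] at hlt
    have h1 : (p.1 : ℕ) ≠ 1 := by
      intro h
      have hp1 : p.1 = 1 := Fin.ext (by simpa using h)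
      rw [hp1, W1_symm_one] at hflip
      exact absurd hflip (Fin.not_lt_zero _)
    have h20 : (p.2 : ℕ) ≠ 0 := by omega
    have e1 := fin_eq_succ_of_ne_zero p.1 h0
    have e2 := fin_eq_succ_of_ne_zero p.2 h20
    rw [e1, e2, W1_symm_succ e _ (by simp; omega), W1_symm_succ e _ (by simp; omega),
      Fin.succ_lt_succ_iff] at hflip
    refine ⟨by simp; omega, by rw [Fin.lt_def]; simp; omega, hflip⟩
  · intro p hp
    replace hp := Finset.mem_coe.mp hp
    refine Finset.mem_coe.mpr ?_
    simp only [Finset.mem_filter, Finset.mem_univ, true_and] at hp ⊢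
    obtain ⟨h0, hlt, hflip⟩ := hp
    have h20 : (p.2 : ℕ) ≠ 0 := by rw [Fin.lt_def] at hlt; omega
    refine ⟨by simp [Fin.val_succ], Fin.succ_lt_succ_iff.mpr hlt, ?_⟩
    rw [W1_symm_succ e _ h0, W1_symm_succ e _ h20]
    exact Fin.succ_lt_succ_iff.mpr hflip
  · intro p hp
    replace hp := Finset.mem_coe.mp hp
    simp only [Finset.mem_filter, Finset.mem_univ, true_and] at hp
    obtain ⟨h0, hlt, _⟩ := hp
    rw [Fin.lt_def] at hlt
    have h20 : (p.2 : ℕ) ≠ 0 := by omega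
    exact Prod.ext (fin_eq_succ_of_ne_zero p.1 h0).symm (fin_eq_succ_of_ne_zero p.2 h20).symm
  · intro p hp
    apply Prod.ext <;> (apply Fin.ext; simp [Fin.val_succ])

lemma reconstruct_one (W : Equiv.Perm (Fin (r + 2))) (hW : ((W.symm 1 : Fin (r+2)) : ℕ) = 0) :
    Equiv.Perm.decomposeFin.symm (1, (Equiv.Perm.decomposeFin W).2) = W := by
  have h0 : W.symm 1 = 0 := Fin.ext hW
  have h1 : (1 : Fin (r + 2)) = W 0 := (Equiv.symm_apply_eq W).mp h0
  rw [show (1 : Fin (r+2)) = (Equiv.Perm.decomposeFin W).1 from by rw [decomposeFin_fst]; exact h1,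
    Prod.mk.eta, Equiv.symm_apply_apply]

lemma sumB (F : ℕ → ℕ → ℝ) :
    ∑ W ∈ Finset.univ.filter
        (fun W : Equiv.Perm (Fin (r + 2)) => ((W.symm 1 : Fin (r + 2)) : ℕ) = 0),
      F (invNZ W) ((W.symm 0 : Fin (r + 2)) : ℕ)
      = ∑ e : Equiv.Perm (Fin (r + 1)), F (invNZ e) (((e.symm 0 : Fin (r + 1)) : ℕ) + 1) := by
  apply Finset.sum_nbij' (i := fun W => (Equiv.Perm.decomposeFin W).2)
    (j := fun e => Equiv.Perm.decomposeFin.symm (1, e))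
  · intro W _
    exact Finset.mem_univ _
  · intro e _
    simp only [Finset.mem_filter, Finset.mem_univ, true_and]
    rw [W1_symm_one]
    rfl
  · intro W hW
    simp only [Finset.mem_filter, Finset.mem_univ, true_and] at hW
    exact reconstruct_one W hW
  · intro e _
    rw [Equiv.apply_symm_apply]
  · intro W hW
    simp only [Finset.mem_filter, Finset.mem_univ, true_and] at hW
    rw [← reconstruct_one W hW, invNZ_W1, Equiv.apply_symm_apply, W1_symm_zero, Fin.val_succ]

end DecompOne
lemma cycleRange_lt_iff {N : ℕ} (j x y : Fin (N + 1)) (hx : x ≠ j) (hy : y ≠ j) :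
    j.cycleRange x < j.cycleRange y ↔ x < y := by
  have vx : ((j.cycleRange x : Fin (N+1)) : ℕ) = if x < j then (x : ℕ) + 1 else (x : ℕ) := by
    rcases lt_or_gt_of_ne hx with h | h
    · rw [if_pos h, Fin.coe_cycleRange_of_lt h]
    · rw [if_neg (not_lt.mpr h.le), Fin.cycleRange_of_gt h]
  have vy : ((j.cycleRange y : Fin (N+1)) : ℕ) = if y < j then (y : ℕ) + 1 else (y : ℕ) := by
    rcases lt_or_gt_of_ne hy with h | h
    · rw [if_pos h, Fin.coe_cycleRange_of_lt h]
    · rw [if_neg (not_lt.mpr h.le), Fin.cycleRange_of_gt h]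
  have hx' : (x : ℕ) ≠ (j : ℕ) := fun h => hx (Fin.ext h)
  have hy' : (y : ℕ) ≠ (j : ℕ) := fun h => hy (Fin.ext h)
  rw [Fin.lt_def, Fin.lt_def, vx, vy]
  split_ifs with h1 h2 h2 <;> rw [Fin.lt_def] at * <;> omega

section Shift

variable {r : ℕ} (j : Fin (r + 2))

private def Phi (e : Equiv.Perm (Fin (r + 2))) : Equiv.Perm (Fin (r + 2)) :=
  (e.symm.trans (Fin.cycleRange j)).symm

private def Psi (f : Equiv.Perm (Fin (r + 2))) : Equiv.Perm (Fin (r + 2)) :=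
  (f.symm.trans (Fin.cycleRange j).symm).symm

lemma Phi_symm_apply (e : Equiv.Perm (Fin (r + 2))) (a : Fin (r + 2)) :
    (Phi j e).symm a = Fin.cycleRange j (e.symm a) := by
  simp [Phi]

lemma Psi_Phi (e : Equiv.Perm (Fin (r + 2))) : Psi j (Phi j e) = e := by
  unfold Psi Phi
  rw [Equiv.symm_symm, Equiv.trans_assoc, Equiv.self_trans_symm, Equiv.trans_refl,
    Equiv.symm_symm]

lemma Phi_Psi (f : Equiv.Perm (Fin (r + 2))) : Phi j (Psi j f) = f := by
  unfold Psi Phi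
  rw [Equiv.symm_symm, Equiv.trans_assoc, Equiv.symm_trans_self, Equiv.trans_refl,
    Equiv.symm_symm]

lemma invNZ_Phi (e : Equiv.Perm (Fin (r + 2))) (he : e.symm 0 = j) :
    invNZ (Phi j e) = invNZ e := by
  unfold invNZ
  congr 1
  apply Finset.filter_congr
  intro p _
  rw [Phi_symm_apply, Phi_symm_apply]
  constructor
  · rintro ⟨h0, hlt, hf⟩
    have h20 : (p.2 : ℕ) ≠ 0 := by rw [Fin.lt_def] at hlt; omega
    have hn1 : e.symm p.1 ≠ j := by
      rw [← he]; intro h; exact h0 (by rw [e.symm.injective h]; rfl)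
    have hn2 : e.symm p.2 ≠ j := by
      rw [← he]; intro h; exact h20 (by rw [e.symm.injective h]; rfl)
    exact ⟨h0, hlt, (cycleRange_lt_iff j _ _ hn2 hn1).mp hf⟩
  · rintro ⟨h0, hlt, hf⟩
    have h20 : (p.2 : ℕ) ≠ 0 := by rw [Fin.lt_def] at hlt; omega
    have hn1 : e.symm p.1 ≠ j := by
      rw [← he]; intro h; exact h0 (by rw [e.symm.injective h]; rfl)
    have hn2 : e.symm p.2 ≠ j := by
      rw [← he]; intro h; exact h20 (by rw [e.symm.injective h]; rfl)
    exact ⟨h0, hlt, (cycleRange_lt_iff j _ _ hn2 hn1).mpr hf⟩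

lemma sumC (F : ℕ → ℝ) :
    ∑ e ∈ Finset.univ.filter (fun e : Equiv.Perm (Fin (r + 2)) => e.symm 0 = j),
      F (invNZ e) = ∑ f : Equiv.Perm (Fin (r + 1)), F (kendall 1 f) := by
  rw [← sumA F]
  apply Finset.sum_nbij' (i := Phi j) (j := Psi j)
  · intro e he
    simp only [Finset.mem_filter, Finset.mem_univ, true_and] at he ⊢
    rw [Phi_symm_apply, he, Fin.cycleRange_self]
    rfl
  · intro f hf
    simp only [Finset.mem_filter, Finset.mem_univ, true_and] at hf ⊢
    have hf0 : f.symm 0 = 0 := Fin.ext hf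
    have : (Psi j f).symm 0 = (Fin.cycleRange j).symm (f.symm 0) := by simp [Psi]
    rw [this, hf0, Equiv.symm_apply_eq, Fin.cycleRange_self]
  · intro e _
    exact Psi_Phi j e
  · intro f _
    exact Phi_Psi j f
  · intro e he
    simp only [Finset.mem_filter, Finset.mem_univ, true_and] at he
    rw [invNZ_Phi j e he]

end Shift

lemma sumD {r : ℕ} (F : ℕ → ℕ → ℝ) :
    ∑ e : Equiv.Perm (Fin (r + 2)), F (invNZ e) ((e.symm 0 : Fin (r + 2)) : ℕ)
      = ∑ t ∈ Finset.range (r + 2), ∑ f : Equiv.Perm (Fin (r + 1)), F (kendall 1 f) t := by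
  rw [← Finset.sum_fiberwise Finset.univ (fun e : Equiv.Perm (Fin (r+2)) => e.symm 0)
    (fun e => F (invNZ e) ((e.symm 0 : Fin (r + 2)) : ℕ))]
  rw [← Fin.sum_univ_eq_sum_range (fun t => ∑ f : Equiv.Perm (Fin (r + 1)), F (kendall 1 f) t)
    (r + 2)]
  apply Finset.sum_congr rfl
  intro j _
  have hcongr : ∀ e ∈ Finset.univ.filter (fun e : Equiv.Perm (Fin (r+2)) => e.symm 0 = j),
      F (invNZ e) ((e.symm 0 : Fin (r + 2)) : ℕ) = F (invNZ e) ((j : Fin (r + 2)) : ℕ) :=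
    fun e he => by rw [(Finset.mem_filter.mp he).2]
  rw [Finset.sum_congr rfl hcongr]
  exact sumC j (fun i => F i ((j : Fin (r+2)) : ℕ))

def gexp (k m I p : ℕ) : ℕ := (k+1)*(I+p) + (k-1)*(I + (m+2-p))

lemma gexp_E1 (k m I t : ℕ) (hk : 1 ≤ k) :
    gexp k m (I + t) 0 = 2*k*t + (2*k*I + (k-1)*(m+2)) := by
  obtain ⟨k', rfl⟩ := Nat.exists_eq_add_of_le hk
  unfold gexp
  have h1 : 1 + k' - 1 = k' := by omega
  rw [h1, Nat.sub_zero]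
  ring

lemma gexp_E2 (k m I t : ℕ) (hk : 1 ≤ k) (ht : t ≤ m + 1) :
    gexp k m I (t+1) = 2*t + (2 + (2*k*I + (k-1)*(m+2))) := by
  obtain ⟨k', rfl⟩ := Nat.exists_eq_add_of_le hk
  obtain ⟨u, hu⟩ := Nat.exists_eq_add_of_le ht
  unfold gexp
  have h1 : 1 + k' - 1 = k' := by omega
  have h2 : m + 2 - (t+1) = u := by omega
  have h3 : m + 2 = t + u + 1 := by omega
  rw [h1, h2, h3]
  ring


/-- for the profile `P*` with `k+1` copies of `0 ≻ 1 ≻ 2 ≻ ⋯` and `k−1`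
copies of `1 ≻ 2 ≻ ⋯ ≻ 0` over `m+3` alternatives (so `c = 0`, `b = 1`), the ratio of
total Mallows likelihoods of `L_c` and `L_b` equals
`[(1+φ^{2k}+⋯+φ^{2k(m'−2)}) / (1+φ²+⋯+φ^{2(m'−2)})] · (1/φ²)` where `m' = m+3`. -/
theorem ratio_Pstar (m k : ℕ) (hk : 1 ≤ k) (φ : ℝ) (hφ0 : 0 < φ) (hφ1 : φ < 1) :
    (∑ V ∈ Finset.univ.filter (fun V : Equiv.Perm (Fin (m + 3)) => (V.symm 0 : ℕ) = 0),
        φ ^ kendallP (Multiset.replicate (k + 1) 1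
          + Multiset.replicate (k - 1) (finRotate (m + 3))) V)
      / (∑ V ∈ Finset.univ.filter (fun V : Equiv.Perm (Fin (m + 3)) => (V.symm 1 : ℕ) = 0),
          φ ^ kendallP (Multiset.replicate (k + 1) 1
            + Multiset.replicate (k - 1) (finRotate (m + 3))) V)
      = ((∑ t ∈ Finset.range (m + 2), φ ^ (2 * k * t))
          / (∑ t ∈ Finset.range (m + 2), φ ^ (2 * t))) * (1 / φ ^ 2) := by
  have hker : ∀ W : Equiv.Perm (Fin (m+3)),
      kendallP (Multiset.replicate (k + 1) 1
          + Multiset.replicate (k - 1) (finRotate (m + 3))) W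
        = gexp k m (invNZ W) ((W.symm 0 : Fin (m+3)) : ℕ) := by
    intro W
    have h1 : kendallP (Multiset.replicate (k + 1) 1
          + Multiset.replicate (k - 1) (finRotate (m + 3))) W
        = (k+1) * kendall 1 W + (k-1) * kendall (finRotate (m+3)) W := by
      unfold kendallP
      rw [Multiset.map_add, Multiset.sum_add, Multiset.map_replicate, Multiset.map_replicate,
        Multiset.sum_replicate, Multiset.sum_replicate, smul_eq_mul, smul_eq_mul]
    rw [h1, kendall_one_decomp (n := m + 2) W, kendall_rot_decomp (n := m + 1) W]
    rfl
  set G : ℝ := ∑ f : Equiv.Perm (Fin (m+1)), φ ^ (2*k*(kendall 1 f) + (k-1)*(m+2)) with hGdef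
  -- Numerator
  have hNum : (∑ V ∈ Finset.univ.filter (fun V : Equiv.Perm (Fin (m + 3)) => (V.symm 0 : ℕ) = 0),
        φ ^ kendallP (Multiset.replicate (k + 1) 1
          + Multiset.replicate (k - 1) (finRotate (m + 3))) V)
      = (∑ t ∈ Finset.range (m + 2), φ ^ (2 * k * t)) * G := by
    have s1 : ∀ V ∈ Finset.univ.filter
          (fun V : Equiv.Perm (Fin (m + 3)) => (V.symm 0 : ℕ) = 0),
        φ ^ kendallP (Multiset.replicate (k + 1) 1
          + Multiset.replicate (k - 1) (finRotate (m + 3))) V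
          = (fun i => φ ^ gexp k m i 0) (invNZ V) := by
      intro V hV
      have h0 := (Finset.mem_filter.mp hV).2
      simp only
      rw [hker V, h0]
    rw [Finset.sum_congr rfl s1, sumA (r := m + 1) (fun i => φ ^ gexp k m i 0)]
    have s2 : ∀ e ∈ (Finset.univ : Finset (Equiv.Perm (Fin (m+2)))), True := fun _ _ => trivial
    have s3 : ∀ e ∈ (Finset.univ : Finset (Equiv.Perm (Fin (m+2)))),
        φ ^ gexp k m (kendall 1 e) 0
          = (fun i p => φ ^ gexp k m (i + p) 0) (invNZ e) ((e.symm 0 : Fin (m+2)) : ℕ) := by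
      intro e _
      simp only
      rw [kendall_one_decomp (n := m + 1) e]
    rw [Finset.sum_congr rfl s3, sumD (r := m) (fun i p => φ ^ gexp k m (i + p) 0)]
    have s4 : ∀ t ∈ Finset.range (m + 2),
        (∑ f : Equiv.Perm (Fin (m+1)), φ ^ gexp k m (kendall 1 f + t) 0)
          = φ ^ (2*k*t) * G := by
      intro t _
      rw [hGdef, Finset.mul_sum]
      apply Finset.sum_congr rfl
      intro f _
      rw [gexp_E1 k m _ t hk, pow_add]
    rw [Finset.sum_congr rfl s4, ← Finset.sum_mul]
  -- Denominator
  have hDen : (∑ V ∈ Finset.univ.filter (fun V : Equiv.Perm (Fin (m + 3)) => (V.symm 1 : ℕ) = 0),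
        φ ^ kendallP (Multiset.replicate (k + 1) 1
          + Multiset.replicate (k - 1) (finRotate (m + 3))) V)
      = (∑ t ∈ Finset.range (m + 2), φ ^ (2 * t)) * (φ ^ 2 * G) := by
    have s1 : ∀ V ∈ Finset.univ.filter
          (fun V : Equiv.Perm (Fin (m + 3)) => (V.symm 1 : ℕ) = 0),
        φ ^ kendallP (Multiset.replicate (k + 1) 1
          + Multiset.replicate (k - 1) (finRotate (m + 3))) V
          = (fun i p => φ ^ gexp k m i p) (invNZ V) ((V.symm 0 : Fin (m+3)) : ℕ) := by
      intro V hV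
      simp only
      rw [hker V]
    rw [Finset.sum_congr rfl s1, sumB (r := m + 1) (fun i p => φ ^ gexp k m i p)]
    rw [sumD (r := m) (fun i p => φ ^ gexp k m i (p + 1))]
    have s4 : ∀ t ∈ Finset.range (m + 2),
        (∑ f : Equiv.Perm (Fin (m+1)), φ ^ gexp k m (kendall 1 f) (t + 1))
          = φ ^ (2*t) * (φ ^ 2 * G) := by
      intro t ht
      have ht' : t ≤ m + 1 := by
        have := Finset.mem_range.mp ht
        omega
      rw [hGdef, Finset.mul_sum, Finset.mul_sum]
      apply Finset.sum_congr rfl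
      intro f _
      rw [gexp_E2 k m _ t hk ht', pow_add, pow_add]
    rw [Finset.sum_congr rfl s4, ← Finset.sum_mul]
  rw [hNum, hDen]
  have hG : (0:ℝ) < G :=
    Finset.sum_pos (fun f _ => pow_pos hφ0 _) ⟨1, Finset.mem_univ 1⟩
  have hS1 : (0:ℝ) < ∑ t ∈ Finset.range (m + 2), φ ^ (2 * t) :=
    Finset.sum_pos (fun t _ => pow_pos hφ0 _) ⟨0, by simp⟩
  have hφ : φ ≠ 0 := ne_of_gt hφ0
  field_simp
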